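/- arXiv:math/0602674 — 5 statements merged into one kernel-verified Lean document; each statement's English description precedes it below -/
import Mathlib

section
/- Let U, M, N be symmetric linear operators on a finite-dimensional Euclidean space such that M and N are nonnegative definite and U is strictly positive definite. Then Tr(MU + NU⁻¹) ≥ 2 Tr(√M · √N), with equality if and only if √M · U = √N. -/
open Matrix

namespace Matrix.PosSemidef

/-- The positive semidefinite square root of a positive semidefinite matrix
(the definition Mathlib had in December 2024, since removed). -/
noncomputable def sqrt {n : Type*} [Fintype n] [DecidableEq n] {𝕜 : Type*} [RCLike 𝕜] [PartialOrder 𝕜]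
    {A : Matrix n n 𝕜} (hA : A.PosSemidef) : Matrix n n 𝕜 :=
  hA.1.eigenvectorUnitary.1 * diagonal ((↑) ∘ (√·) ∘ hA.1.eigenvalues) *
  (star hA.1.eigenvectorUnitary : Matrix n n 𝕜)

end Matrix.PosSemidef

namespace Matrix.PosSemidef

lemma posSemidef_sqrt {m : ℕ} {A : Matrix (Fin m) (Fin m) ℝ} (hA : A.PosSemidef) :
    hA.sqrt.PosSemidef := by
  unfold Matrix.PosSemidef.sqrt
  have h := (posSemidef_diagonal_iff.mpr fun i => (Real.sqrt_nonneg (hA.1.eigenvalues i) :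
    (0:ℝ) ≤ ((RCLike.ofReal : ℝ → ℝ) ∘ (√·) ∘ hA.1.eigenvalues) i)).mul_mul_conjTranspose_same
    (hA.1.eigenvectorUnitary : Matrix (Fin m) (Fin m) ℝ)
  simpa [Matrix.star_eq_conjTranspose, Function.comp_def] using h

lemma sqrt_mul_self {m : ℕ} {A : Matrix (Fin m) (Fin m) ℝ} (hA : A.PosSemidef) :
    hA.sqrt * hA.sqrt = A := by
  have hs := hA.1.spectral_theorem
  rw [Unitary.conjStarAlgAut_apply] at hs
  have hCC : (star (hA.1.eigenvectorUnitary : Matrix (Fin m) (Fin m) ℝ)) *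
      (hA.1.eigenvectorUnitary : Matrix (Fin m) (Fin m) ℝ) = 1 := by simp
  unfold Matrix.PosSemidef.sqrt
  conv_rhs => rw [hs]
  set C := (hA.1.eigenvectorUnitary : Matrix (Fin m) (Fin m) ℝ)
  rw [show C * diagonal ((RCLike.ofReal : ℝ → ℝ) ∘ (√·) ∘ hA.1.eigenvalues) * star C *
      (C * diagonal ((RCLike.ofReal : ℝ → ℝ) ∘ (√·) ∘ hA.1.eigenvalues) * star C) =
      C * (diagonal ((RCLike.ofReal : ℝ → ℝ) ∘ (√·) ∘ hA.1.eigenvalues) * (star C * C) *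
      diagonal ((RCLike.ofReal : ℝ → ℝ) ∘ (√·) ∘ hA.1.eigenvalues)) * star C by
    simp only [Matrix.mul_assoc], hCC, Matrix.mul_one, diagonal_mul_diagonal]
  congr 2
  exact congrArg diagonal (funext fun i => by simp [Real.mul_self_sqrt (hA.eigenvalues_nonneg i)])

end Matrix.PosSemidef

/-- Trace of `A * Aᴴ` over ℝ is the sum of squares of entries. -/
private lemma trace_mul_conjTranspose_self {m : ℕ} (A : Matrix (Fin m) (Fin m) ℝ) :
    (A * Aᴴ).trace = ∑ i, ∑ j, (A i j) ^ 2 := by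
  simp [Matrix.trace, Matrix.diag, Matrix.mul_apply, Matrix.conjTranspose_apply, sq]

/-- Trace inequality for symmetric operators: for `M, N` nonnegative definite
and `U` positive definite, `Tr(MU + NU⁻¹) ≥ 2 Tr(√M √N)`, with equality
iff `√M U = √N`. -/
theorem stmt0 {m : ℕ} (U M N : Matrix (Fin m) (Fin m) ℝ)
    (hM : M.PosSemidef) (hN : N.PosSemidef) (hU : U.PosDef) :
    2 * (hM.sqrt * hN.sqrt).trace ≤ (M * U + N * U⁻¹).trace ∧
    ((M * U + N * U⁻¹).trace = 2 * (hM.sqrt * hN.sqrt).trace ↔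
      hM.sqrt * U = hN.sqrt) := by
  set S := hM.sqrt with hSdef
  set T := hN.sqrt with hTdef
  set V := hU.posSemidef.sqrt with hVdef
  set W := V⁻¹ with hWdef
  have hVps : V.PosSemidef := hU.posSemidef.posSemidef_sqrt
  have hVV : V * V = U := hU.posSemidef.sqrt_mul_self
  have hSS : S * S = M := hM.sqrt_mul_self
  have hTT : T * T = N := hN.sqrt_mul_self
  have hdet : IsUnit V.det := by
    refine isUnit_iff_ne_zero.mpr fun h => ?_
    have h2 : V.det * V.det = U.det := by rw [← det_mul, hVV]
    rw [h, mul_zero] at h2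
    exact hU.det_pos.ne h2
  have hVW : V * W = 1 := mul_nonsing_inv _ hdet
  have hWV : W * V = 1 := nonsing_inv_mul _ hdet
  have hWW : W * W = U⁻¹ := by rw [hWdef, ← Matrix.mul_inv_rev, hVV]
  -- Hermitian (symmetry) facts
  have hSH : Sᴴ = S := hM.posSemidef_sqrt.isHermitian
  have hTH : Tᴴ = T := hN.posSemidef_sqrt.isHermitian
  have hVH : Vᴴ = V := hVps.isHermitian
  have hWH : Wᴴ = W := hVps.inv.isHermitian
  have hUH : Uᴴ = U := hU.isHermitian
  set X := V * S - W * T with hXdef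
  have hXH : Xᴴ = S * V - T * W := by
    rw [hXdef, conjTranspose_sub, conjTranspose_mul, conjTranspose_mul, hSH, hTH, hVH, hWH]
  -- four trace identities
  have h1 : ((V * S) * (S * V)).trace = (M * U).trace := by
    rw [show (V * S) * (S * V) = V * (S * S * V) by noncomm_ring, trace_mul_comm,
      show S * S * V * V = (S * S) * (V * V) by noncomm_ring, hSS, hVV]
  have h2 : ((V * S) * (T * W)).trace = (S * T).trace := by
    rw [show (V * S) * (T * W) = V * (S * T * W) by noncomm_ring, trace_mul_comm,
      show S * T * W * V = (S * T) * (W * V) by noncomm_ring, hWV, mul_one]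
  have h3 : ((W * T) * (S * V)).trace = (S * T).trace := by
    rw [show (W * T) * (S * V) = W * (T * S * V) by noncomm_ring, trace_mul_comm,
      show T * S * V * W = (T * S) * (V * W) by noncomm_ring, hVW, mul_one, trace_mul_comm]
  have h4 : ((W * T) * (T * W)).trace = (N * U⁻¹).trace := by
    rw [show (W * T) * (T * W) = W * (T * T * W) by noncomm_ring, trace_mul_comm,
      show T * T * W * W = (T * T) * (W * W) by noncomm_ring, hTT, hWW]
  have hkey : (X * Xᴴ).trace = (M * U + N * U⁻¹).trace - 2 * (S * T).trace := by
    rw [hXH, hXdef, sub_mul, mul_sub, mul_sub, trace_sub, trace_sub, trace_sub,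
      trace_add, h1, h2, h3, h4]
    ring
  have htrX : (X * Xᴴ).trace = ∑ i, ∑ j, (X i j) ^ 2 := trace_mul_conjTranspose_self X
  have hnn : 0 ≤ (X * Xᴴ).trace := by
    rw [htrX]
    exact Finset.sum_nonneg fun i _ => Finset.sum_nonneg fun j _ => sq_nonneg _
  have hzero : (X * Xᴴ).trace = 0 ↔ X = 0 := by
    constructor
    · intro h
      ext i j
      rw [htrX] at h
      have hi := (Finset.sum_eq_zero_iff_of_nonneg
        (fun i _ => Finset.sum_nonneg fun j _ => sq_nonneg (X i j))).mp h i (Finset.mem_univ i)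
      have hj := (Finset.sum_eq_zero_iff_of_nonneg
        (fun j _ => sq_nonneg (X i j))).mp hi j (Finset.mem_univ j)
      simpa using pow_eq_zero_iff (n := 2) (by norm_num) |>.mp hj
    · intro h
      rw [h, Matrix.zero_mul, trace_zero]
  have hXiff : X = 0 ↔ S * U = T := by
    constructor
    · intro h
      have hVS : V * S = W * T := by rwa [hXdef, sub_eq_zero] at h
      have hUS : U * S = T := by
        calc U * S = V * (V * S) := by rw [← Matrix.mul_assoc, hVV]
        _ = V * (W * T) := by rw [hVS]
        _ = (V * W) * T := by rw [Matrix.mul_assoc]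
        _ = T := by rw [hVW, Matrix.one_mul]
      calc S * U = (U * S)ᴴ := by rw [conjTranspose_mul, hSH, hUH]
      _ = Tᴴ := by rw [hUS]
      _ = T := hTH
    · intro h
      have hUS : U * S = T := by
        calc U * S = (S * U)ᴴ := by rw [conjTranspose_mul, hSH, hUH]
        _ = Tᴴ := by rw [h]
        _ = T := hTH
      have : V * S = W * T := by
        calc V * S = (W * V) * (V * S) := by rw [hWV, Matrix.one_mul]
        _ = W * (V * V * S) := by noncomm_ring
        _ = W * (U * S) := by rw [hVV]
        _ = W * T := by rw [hUS]
      rw [hXdef, this, sub_self]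
  constructor
  · linarith [hnn, hkey]
  · constructor
    · intro h
      apply hXiff.mp
      apply hzero.mp
      rw [hkey, h]
      ring
    · intro h
      have : (X * Xᴴ).trace = 0 := hzero.mpr (hXiff.mpr h)
      rw [hkey] at this
      linarith
end

section
/- Let ξ : ℝ → ℝ^m solve ξ''(t) + R(t)ξ(t) = 0 with R(t) symmetric negative semidefinite for all t. Then a solution ξ is such that t ↦ |ξ(t)| is nondecreasing on all of ℝ if and only if |ξ(t)| is bounded for t ≤ 0. -/
open Matrix

/-- For a solution of `ξ'' + R(t) ξ = 0` with `R(t)` symmetric negative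
semidefinite, `t ↦ |ξ(t)|` is nondecreasing on all of `ℝ` iff `|ξ(t)|` is
bounded for `t ≤ 0`. -/
theorem stmt4 {m : ℕ} (R : ℝ → Matrix (Fin m) (Fin m) ℝ) (hRc : Continuous R)
    (hRsym : ∀ t, (R t).IsSymm) (hRneg : ∀ t x, (R t).mulVec x ⬝ᵥ x ≤ 0)
    (ξ : ℝ → Fin m → ℝ) (hξ : ContDiff ℝ 2 ξ)
    (hODE : ∀ t, deriv (deriv ξ) t + (R t).mulVec (ξ t) = 0) :
    Monotone (fun t => Real.sqrt (ξ t ⬝ᵥ ξ t)) ↔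
      ∃ C : ℝ, ∀ t ≤ (0:ℝ), Real.sqrt (ξ t ⬝ᵥ ξ t) ≤ C := by
  set f : ℝ → ℝ := fun t => ξ t ⬝ᵥ ξ t with hfdef
  have hf0 : ∀ t, 0 ≤ f t := fun t =>
    Finset.sum_nonneg fun i _ => mul_self_nonneg _
  constructor
  · intro hmono
    exact ⟨Real.sqrt (f 0), fun t ht => hmono ht⟩
  · rintro ⟨C, hC⟩
    -- differentiability infrastructure
    have hdiff : Differentiable ℝ ξ := hξ.differentiable (by norm_num)
    have hξ' : ContDiff ℝ 1 (deriv ξ) := by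
      have h2 : (2 : WithTop ℕ∞) = 1 + 1 := by norm_num
      exact (contDiff_succ_iff_deriv.1 (h2 ▸ hξ)).2.2
    have hdiff' : Differentiable ℝ (deriv ξ) := hξ'.differentiable one_ne_zero
    have h1 : ∀ t i, HasDerivAt (fun t => ξ t i) (deriv ξ t i) t :=
      fun t i => hasDerivAt_pi.1 (hdiff t).hasDerivAt i
    have h1' : ∀ t i, HasDerivAt (fun t => deriv ξ t i) (deriv (deriv ξ) t i) t :=
      fun t i => hasDerivAt_pi.1 (hdiff' t).hasDerivAt i
    have hd1 : ∀ t, HasDerivAt f (2 * (deriv ξ t ⬝ᵥ ξ t)) t := by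
      intro t
      have h2 : HasDerivAt (fun t => ∑ i, ξ t i * ξ t i)
          (∑ i, (deriv ξ t i * ξ t i + ξ t i * deriv ξ t i)) t :=
        HasDerivAt.fun_sum fun i _ => (h1 t i).mul (h1 t i)
      convert h2 using 1
      · rfl
      simp [dotProduct, Finset.mul_sum, Finset.sum_add_distrib, two_mul, mul_comm]
    have hdf : Differentiable ℝ f := fun t => (hd1 t).differentiableAt
    have hderiv : deriv f = fun t => 2 * (deriv ξ t ⬝ᵥ ξ t) :=
      funext fun t => (hd1 t).deriv
    have hd2 : ∀ t, HasDerivAt (deriv f)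
        (2 * (deriv (deriv ξ) t ⬝ᵥ ξ t + deriv ξ t ⬝ᵥ deriv ξ t)) t := by
      intro t
      rw [hderiv]
      have h2 : HasDerivAt (fun t => ∑ i, deriv ξ t i * ξ t i)
          (∑ i, (deriv (deriv ξ) t i * ξ t i + deriv ξ t i * deriv ξ t i)) t :=
        HasDerivAt.fun_sum fun i _ => (h1' t i).mul (h1 t i)
      have := h2.const_mul (2 : ℝ)
      convert this using 1
      · rfl
      · rfl
      all_goals simp [dotProduct, Finset.mul_sum, Finset.sum_add_distrib, mul_add]
    have hdf' : Differentiable ℝ (deriv f) := fun t => (hd2 t).differentiableAt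
    have hD0 : ∀ t, 0 ≤ deriv (deriv f) t := by
      intro t
      rw [(hd2 t).deriv]
      have hODE' : deriv (deriv ξ) t = -(R t).mulVec (ξ t) :=
        eq_neg_of_add_eq_zero_left (hODE t)
      have h1 : (0:ℝ) ≤ deriv (deriv ξ) t ⬝ᵥ ξ t := by
        rw [hODE', neg_dotProduct]
        linarith [hRneg t (ξ t)]
      have h2 : (0:ℝ) ≤ deriv ξ t ⬝ᵥ deriv ξ t :=
        Finset.sum_nonneg fun i _ => mul_self_nonneg _
      positivity
    have hmono' : Monotone (deriv f) :=
      monotone_of_deriv_nonneg hdf' hD0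
    -- bound: f t ≤ C'^2 for t ≤ 0
    have hCnn : 0 ≤ C := le_trans (Real.sqrt_nonneg _) (hC 0 le_rfl)
    have hfC : ∀ t ≤ (0:ℝ), f t ≤ C ^ 2 := by
      intro t ht
      have := hC t ht
      nlinarith [Real.sq_sqrt (hf0 t), Real.sqrt_nonneg (f t)]
    -- deriv f is nonneg everywhere
    have h0 : ∀ t, 0 ≤ deriv f t := by
      intro a
      by_contra hneg
      push_neg at hneg
      set s := deriv f a with hs
      set B : ℝ := max ((C ^ 2 - f a) / (-s)) 0 + 1 with hB
      have hB1 : (1:ℝ) ≤ B := le_add_of_nonneg_left (le_max_right _ _)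
      set t0 : ℝ := min a 0 - B with ht0
      have ht0a : t0 < a := by
        have : min a 0 ≤ a := min_le_left _ _
        simp only [ht0]; linarith
      have ht00 : t0 ≤ 0 := by
        have : min a 0 ≤ 0 := min_le_right _ _
        simp only [ht0]; linarith
      obtain ⟨c, hc, hcslope⟩ := exists_deriv_eq_slope f ht0a
        (hdf.continuous.continuousOn) (hdf.differentiableOn)
      have hca : deriv f c ≤ s := hmono' (le_of_lt hc.2)
      have hslope : (f a - f t0) / (a - t0) ≤ s := hcslope ▸ hca
      have hpos : (0:ℝ) < a - t0 := by linarith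
      have hle : f a - f t0 ≤ s * (a - t0) :=
        (div_le_iff₀ hpos).1 hslope
      -- (-s) * (a - t0) > C^2 - f a
      have hA : (C ^ 2 - f a) / (-s) < a - t0 := by
        have h1 : (C ^ 2 - f a) / (-s) ≤ max ((C ^ 2 - f a) / (-s)) 0 := le_max_left _ _
        have h2 : min a 0 ≤ a := min_le_left _ _
        simp only [ht0]; linarith
      have hspos : (0:ℝ) < -s := by linarith
      have hgt : C ^ 2 - f a < (-s) * (a - t0) := by
        have := (div_lt_iff₀ hspos).1 hA
        linarith [this]
      have hft0 : C ^ 2 < f t0 := by nlinarith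
      exact absurd (hfC t0 ht00) (not_le.2 hft0)
    have hmf : Monotone f := monotone_of_deriv_nonneg hdf h0
    exact fun a b hab => Real.sqrt_le_sqrt (hmf hab)
end

section
/- Let ξ : ℝ → ℝ^m solve ξ''(t) + R(t)ξ(t) = 0 with R(t) symmetric negative semidefinite. If |ξ(t)| is nondecreasing in t and ξ'(0) = 0, then ξ'(t) = 0 and R(t)ξ(t) = 0 for all t ≤ 0. -/
open Matrix

private lemma negR_psd {m : ℕ} (A : Matrix (Fin m) (Fin m) ℝ) (hsym : A.IsSymm)
    (hneg : ∀ x, A.mulVec x ⬝ᵥ x ≤ 0) : (-A).PosSemidef := by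
  refine Matrix.posSemidef_iff_dotProduct_mulVec.mpr ⟨?_, ?_⟩
  · show (-A)ᴴ = -A
    ext i j
    simp only [Matrix.conjTranspose_apply, Matrix.neg_apply, star_trivial, neg_inj]
    exact (congrFun (congrFun hsym j) i).symm ▸ rfl
  · intro x
    have := hneg x
    simp only [Matrix.neg_mulVec, dotProduct_neg, star_trivial]
    rw [dotProduct_comm] at this
    linarith

/-- For a solution of `ξ'' + R(t) ξ = 0` with `R(t)` symmetric negative
semidefinite, if `|ξ(t)|` is nondecreasing and `ξ'(0) = 0`, then `ξ'(t) = 0`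
and `R(t) ξ(t) = 0` for all `t ≤ 0`. -/
theorem stmt5 {m : ℕ} (R : ℝ → Matrix (Fin m) (Fin m) ℝ) (hRc : Continuous R)
    (hRsym : ∀ t, (R t).IsSymm) (hRneg : ∀ t x, (R t).mulVec x ⬝ᵥ x ≤ 0)
    (ξ : ℝ → Fin m → ℝ) (hξ : ContDiff ℝ 2 ξ)
    (hODE : ∀ t, deriv (deriv ξ) t + (R t).mulVec (ξ t) = 0)
    (hmono : Monotone (fun t => Real.sqrt (ξ t ⬝ᵥ ξ t)))
    (h1 : deriv ξ 0 = 0) :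
    ∀ t ≤ (0:ℝ), deriv ξ t = 0 ∧ (R t).mulVec (ξ t) = 0 := by
  have hξd : Differentiable ℝ ξ := hξ.differentiable (by norm_num)
  have hξ' : ContDiff ℝ 1 (deriv ξ) := by
    have := (contDiff_succ_iff_deriv (n := 1)).mp (by exact_mod_cast hξ)
    exact this.2.2
  have hξ'd : Differentiable ℝ (deriv ξ) := hξ'.differentiable (by norm_num)
  -- component derivatives
  have hcomp : ∀ (t : ℝ) (i : Fin m), HasDerivAt (fun s => ξ s i) (deriv ξ t i) t :=
    fun t i => hasDerivAt_pi.mp (hξd t).hasDerivAt i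
  have hcomp' : ∀ (t : ℝ) (i : Fin m), HasDerivAt (fun s => deriv ξ s i)
      (deriv (deriv ξ) t i) t :=
    fun t i => hasDerivAt_pi.mp (hξ'd t).hasDerivAt i
  set G : ℝ → ℝ := fun t => ξ t ⬝ᵥ ξ t with hG
  set G' : ℝ → ℝ := fun t => 2 * (deriv ξ t ⬝ᵥ ξ t) with hG'
  have hGd : ∀ t, HasDerivAt G (G' t) t := by
    intro t
    have : HasDerivAt (fun s => ∑ i, ξ s i * ξ s i)
        (∑ i, (deriv ξ t i * ξ t i + ξ t i * deriv ξ t i)) t :=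
      HasDerivAt.fun_sum fun i _ => (hcomp t i).mul (hcomp t i)
    convert this using 1 <;> simp [hG, hG', dotProduct, Finset.mul_sum, mul_comm, two_mul,
      Finset.sum_add_distrib]
  have hderivG : deriv G = G' := funext fun t => (hGd t).deriv
  have hG'd : ∀ t, HasDerivAt G'
      (2 * (deriv (deriv ξ) t ⬝ᵥ ξ t + deriv ξ t ⬝ᵥ deriv ξ t)) t := by
    intro t
    have : HasDerivAt (fun s => ∑ i, deriv ξ s i * ξ s i)
        (∑ i, (deriv (deriv ξ) t i * ξ t i + deriv ξ t i * deriv ξ t i)) t :=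
      HasDerivAt.fun_sum fun i _ => (hcomp' t i).mul (hcomp t i)
    have h2 : HasDerivAt (fun s => 2 * ∑ i, deriv ξ s i * ξ s i)
        (2 * ∑ i, (deriv (deriv ξ) t i * ξ t i + deriv ξ t i * deriv ξ t i)) t :=
      this.const_mul (2:ℝ)
    convert h2 using 1 <;> simp [hG', dotProduct, Finset.mul_sum,
      Finset.sum_add_distrib, mul_add]
  -- G'' ≥ 0, so G' is monotone
  have hG'mono : Monotone G' := by
    apply monotone_of_deriv_nonneg (fun t => (hG'd t).differentiableAt)
    intro t
    rw [(hG'd t).deriv]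
    have hode := hODE t
    have hdd : deriv (deriv ξ) t = -(R t).mulVec (ξ t) := by
      have := congrArg (fun v => v - (R t).mulVec (ξ t)) hode
      simpa [sub_eq_iff_eq_add, neg_add_eq_sub] using this
    rw [hdd]
    have h1' : (R t).mulVec (ξ t) ⬝ᵥ ξ t ≤ 0 := hRneg t (ξ t)
    have h2' : (0:ℝ) ≤ deriv ξ t ⬝ᵥ deriv ξ t := Finset.sum_nonneg fun i _ => mul_self_nonneg _
    simp only [neg_dotProduct]
    nlinarith
  have hG'0 : G' 0 = 0 := by simp [hG', h1]
  -- G monotone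
  have hGnonneg : ∀ t, (0:ℝ) ≤ G t := fun t => Finset.sum_nonneg fun i _ => mul_self_nonneg _
  have hGmono : Monotone G := by
    intro a b hab
    have := hmono hab
    calc G a = Real.sqrt (G a) ^ 2 := (Real.sq_sqrt (hGnonneg a)).symm
      _ ≤ Real.sqrt (G b) ^ 2 := by
          apply pow_le_pow_left₀ (Real.sqrt_nonneg _) this
      _ = G b := Real.sq_sqrt (hGnonneg b)
  -- G is antitone on Iic 0 since G' ≤ 0 there
  have hG'nonpos : ∀ t ≤ (0:ℝ), G' t ≤ 0 := fun t ht => hG'0 ▸ hG'mono ht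
  have hGanti : AntitoneOn G (Set.Iic 0) := by
    apply antitoneOn_of_deriv_nonpos (convex_Iic 0)
      (fun t _ => (hGd t).continuousAt.continuousWithinAt)
      (fun t ht => ((hGd t).differentiableAt.differentiableWithinAt))
    intro t ht
    rw [(hGd t).deriv]
    exact hG'nonpos t (le_of_lt (by simpa using ht))
  -- G is constant on Iic 0
  have hGconst : ∀ t ≤ (0:ℝ), G t = G 0 := by
    intro t ht
    exact le_antisymm (hGmono ht) (hGanti (Set.mem_Iic.mpr ht) (Set.mem_Iic.mpr le_rfl) ht)
  -- hence G' = 0 on Iio 0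
  have hG'zero : ∀ t < (0:ℝ), G' t = 0 := by
    intro t ht
    have : deriv G t = 0 := by
      have hev : G =ᶠ[nhds t] (fun _ => G 0) := by
        filter_upwards [Iio_mem_nhds ht] with s hs
        exact hGconst s (le_of_lt hs)
      rw [hev.deriv_eq]
      exact deriv_const t (G 0)
    rwa [hderivG] at this
  -- and deriv G' = 0 on Iio 0
  have hG''zero : ∀ t < (0:ℝ), deriv (deriv ξ) t ⬝ᵥ ξ t + deriv ξ t ⬝ᵥ deriv ξ t = 0 := by
    intro t ht
    have : deriv G' t = 0 := by
      have hev : G' =ᶠ[nhds t] (fun _ => (0:ℝ)) := by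
        filter_upwards [Iio_mem_nhds ht] with s hs
        exact hG'zero s hs
      rw [hev.deriv_eq]
      exact deriv_const t 0
    rw [(hG'd t).deriv] at this
    linarith
  -- key pointwise fact for t < 0
  have key : ∀ t < (0:ℝ), deriv ξ t = 0 ∧ (R t).mulVec (ξ t) ⬝ᵥ ξ t = 0 := by
    intro t ht
    have hode := hODE t
    have hdd : deriv (deriv ξ) t = -(R t).mulVec (ξ t) := by
      have := congrArg (fun v => v - (R t).mulVec (ξ t)) hode
      simpa [sub_eq_iff_eq_add, neg_add_eq_sub] using this
    have h0 := hG''zero t ht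
    rw [hdd] at h0
    simp only [neg_dotProduct] at h0
    have h1' : (R t).mulVec (ξ t) ⬝ᵥ ξ t ≤ 0 := hRneg t (ξ t)
    have h2' : (0:ℝ) ≤ deriv ξ t ⬝ᵥ deriv ξ t := Finset.sum_nonneg fun i _ => mul_self_nonneg _
    have hq : deriv ξ t ⬝ᵥ deriv ξ t = 0 := by linarith
    constructor
    · funext i
      have : ∑ i, deriv ξ t i * deriv ξ t i = 0 := hq
      have := (Finset.sum_eq_zero_iff_of_nonneg
        (fun i _ => mul_self_nonneg (deriv ξ t i))).mp this i (Finset.mem_univ i)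
      have := mul_self_eq_zero.mp this
      simpa using this
    · linarith
  -- upgrade Rξ⬝ξ = 0 to Rξ = 0
  have upgrade : ∀ t, (R t).mulVec (ξ t) ⬝ᵥ ξ t = 0 → (R t).mulVec (ξ t) = 0 := by
    intro t h0
    have hpsd := negR_psd (R t) (hRsym t) (hRneg t)
    have := (hpsd.dotProduct_mulVec_zero_iff (ξ t)).mp ?_
    · have h2 : -((R t).mulVec (ξ t)) = 0 := by
        simpa [Matrix.neg_mulVec] using this
      simpa [neg_eq_zero] using h2
    · simp only [star_trivial, Matrix.neg_mulVec, dotProduct_neg]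
      rw [dotProduct_comm] at h0
      rw [h0, neg_zero]
  intro t ht
  rcases lt_or_eq_of_le ht with ht' | rfl
  · obtain ⟨ha, hb⟩ := key t ht'
    exact ⟨ha, upgrade t hb⟩
  · refine ⟨h1, upgrade 0 ?_⟩
    -- continuity argument at 0
    have hcont : Continuous (fun t => (R t).mulVec (ξ t) ⬝ᵥ ξ t) := by
      have hRξ : Continuous (fun t => (R t).mulVec (ξ t)) := by
        apply continuous_pi; intro i
        simp only [Matrix.mulVec, dotProduct]
        apply continuous_finset_sum; intro j _
        exact (((continuous_apply j).comp ((continuous_apply i).comp hRc)).mul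
          ((continuous_apply j).comp hξd.continuous))
      simp only [dotProduct]
      apply continuous_finset_sum; intro i _
      exact ((continuous_apply i).comp hRξ).mul ((continuous_apply i).comp hξd.continuous)
    have htend : Filter.Tendsto (fun t => (R t).mulVec (ξ t) ⬝ᵥ ξ t)
        (nhdsWithin 0 (Set.Iio 0)) (nhds ((R 0).mulVec (ξ 0) ⬝ᵥ ξ 0)) :=
      (hcont.tendsto 0).mono_left nhdsWithin_le_nhds
    have htend0 : Filter.Tendsto (fun t => (R t).mulVec (ξ t) ⬝ᵥ ξ t)
        (nhdsWithin 0 (Set.Iio 0)) (nhds 0) := by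
      apply Filter.Tendsto.congr' _ tendsto_const_nhds
      filter_upwards [self_mem_nhdsWithin] with s hs
      exact ((key s hs).2).symm
    exact tendsto_nhds_unique htend htend0
end

section
/- Let V : ℝ → Sym(m, ℝ) be a differentiable path of symmetric matrices satisfying the Riccati equation V'(t) + V(t)² + R(t) = 0, with V(t) nonnegative definite and R(t) symmetric negative semidefinite for all t. Then for each t, R(t) vanishes on ker V(t), and both R(t) and V(t) preserve the orthogonal complement of ker V(t). -/
open Matrix

private lemma symm_dot {m : ℕ} {A : Matrix (Fin m) (Fin m) ℝ} (hA : A.IsSymm)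
    (x y : Fin m → ℝ) : A.mulVec x ⬝ᵥ y = A.mulVec y ⬝ᵥ x := by
  rw [dotProduct_comm, dotProduct_mulVec, ← Matrix.mulVec_transpose, hA.eq]

/-- For a nonnegative-definite symmetric solution `V` of the Riccati equation
`V' + V² + R = 0` with `R(t)` symmetric negative semidefinite (in the flow
setting where every vector of `ker V(t)` arises as the value of a Jacobi
solution with vanishing derivative on `(-∞, t]`), the operator `R(t)` vanishes
on `ker V(t)`, and both `R(t)` and `V(t)` preserve the orthogonal complement
of `ker V(t)`. -/
theorem stmt6 {m : ℕ} (V V' R : ℝ → Matrix (Fin m) (Fin m) ℝ)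
    (hVsym : ∀ t, (V t).IsSymm) (hRsym : ∀ t, (R t).IsSymm)
    (hVpos : ∀ t x, 0 ≤ (V t).mulVec x ⬝ᵥ x)
    (hRneg : ∀ t x, (R t).mulVec x ⬝ᵥ x ≤ 0)
    (hV' : ∀ t i j, HasDerivAt (fun s => V s i j) (V' t i j) t)
    (hRic : ∀ t, V' t + (V t) ^ 2 + R t = 0)
    (hker : ∀ t (x : Fin m → ℝ), (V t).mulVec x = 0 →
      ∃ ξ : ℝ → Fin m → ℝ, ContDiff ℝ 2 ξ ∧
        (∀ s, deriv (deriv ξ) s + (R s).mulVec (ξ s) = 0) ∧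
        ξ t = x ∧ ∀ s ≤ t, deriv ξ s = 0) :
    ∀ t : ℝ,
      (∀ x : Fin m → ℝ, (V t).mulVec x = 0 → (R t).mulVec x = 0) ∧
      (∀ x : Fin m → ℝ, (∀ y : Fin m → ℝ, (V t).mulVec y = 0 → x ⬝ᵥ y = 0) →
        (∀ y : Fin m → ℝ, (V t).mulVec y = 0 → (R t).mulVec x ⬝ᵥ y = 0) ∧
        (∀ y : Fin m → ℝ, (V t).mulVec y = 0 → (V t).mulVec x ⬝ᵥ y = 0)) := by
  intro t
  have part1 : ∀ x : Fin m → ℝ, (V t).mulVec x = 0 → (R t).mulVec x = 0 := by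
    intro x hx
    -- the function s ↦ ⟨V(s)x, x⟩
    have hderiv : HasDerivAt (fun s => (V s).mulVec x ⬝ᵥ x) ((V' t).mulVec x ⬝ᵥ x) t := by
      have h1 : HasDerivAt (fun s => ∑ i, (∑ j, V s i j * x j) * x i)
          (∑ i, (∑ j, V' t i j * x j) * x i) t := by
        refine HasDerivAt.fun_sum fun i _ => ?_
        exact (HasDerivAt.fun_sum fun j _ => (hV' t i j).mul_const (x j)).mul_const (x i)
      simpa [Matrix.mulVec, dotProduct] using h1
    have hmin : IsLocalMin (fun s => (V s).mulVec x ⬝ᵥ x) t := by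
      refine Filter.Eventually.of_forall fun s => ?_
      simp only [hx, zero_dotProduct]
      exact hVpos s x
    have hd0 : (V' t).mulVec x ⬝ᵥ x = 0 := by
      simpa [hx] using hmin.hasDerivAt_eq_zero hderiv
    have hV'eq : V' t = -((V t) ^ 2 + R t) := by
      have := hRic t
      linear_combination (norm := abel) this
    have hsq : ((V t) ^ 2).mulVec x = 0 := by
      rw [pow_two, ← Matrix.mulVec_mulVec, hx, Matrix.mulVec_zero]
    have hR0 : (R t).mulVec x ⬝ᵥ x = 0 := by
      have : (-((V t) ^ 2 + R t)).mulVec x ⬝ᵥ x = 0 := hV'eq ▸ hd0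
      simpa [Matrix.neg_mulVec, Matrix.add_mulVec, hsq, add_dotProduct,
        neg_dotProduct] using this
    -- -R t is PSD
    have hpsd : (-(R t)).PosSemidef := by
      refine Matrix.posSemidef_iff_dotProduct_mulVec.mpr ⟨?_, ?_⟩
      · have := (hRsym t).eq
        simp only [Matrix.IsHermitian, conjTranspose_neg]
        rw [show (R t)ᴴ = (R t)ᵀ from rfl, this]
      · intro y
        have h := hRneg t y
        rw [dotProduct_comm] at h
        simp only [star_trivial, Matrix.neg_mulVec, dotProduct_neg]
        linarith
    have : (-(R t)).mulVec x = 0 := by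
      rw [← hpsd.dotProduct_mulVec_zero_iff x]
      simp only [Matrix.neg_mulVec, star_trivial, dotProduct_neg]
      rw [dotProduct_comm] at hR0
      simp [hR0]
    simpa [Matrix.neg_mulVec, neg_eq_zero] using this
  refine ⟨part1, fun x _ => ⟨fun y hy => ?_, fun y hy => ?_⟩⟩
  · rw [symm_dot (hRsym t), part1 y hy, zero_dotProduct]
  · rw [symm_dot (hVsym t), hy, zero_dotProduct]
end

section
/- Let A : ℝ → GL(m, ℝ) with A(t) = I + V(t)² for a C¹ family of symmetric matrices V(t) satisfying V'(t) = −V(t)² − R(t). Define a(t) = √(det A(t)) · det(exp(∫₀ᵗ V(s) ds)) (all matrices commuting is not assumed; the second factor is |det of the solution of the linear ODE ξ' = Vξ|). Then r(t) := (d/dt) log a(t) = ½ Tr(A'(t) A(t)⁻¹) + Tr V(t) = Tr[(V(t) − R(t)V(t))(I + V(t)²)⁻¹]. -/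
open Matrix

/-- Row form of determinant. -/
lemma det_eq_sum_rows {m : ℕ} (M : Matrix (Fin m) (Fin m) ℝ) :
    M.det = ∑ σ : Equiv.Perm (Fin m), ((Equiv.Perm.sign σ : ℤ) : ℝ) * ∏ i, M i (σ i) := by
  rw [← det_transpose, det_apply']
  simp [transpose_apply]

/-- Jacobi-type formula: derivative of determinant, row version. -/
lemma hasDerivAt_det' {m : ℕ} (M : ℝ → Matrix (Fin m) (Fin m) ℝ)
    (M' : Matrix (Fin m) (Fin m) ℝ) (t : ℝ)
    (h : ∀ i j, HasDerivAt (fun s => M s i j) (M' i j) t) :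
    HasDerivAt (fun s => (M s).det)
      (∑ i, ((M t).updateRow i (M' i)).det) t := by
  have key : HasDerivAt
      (fun s => ∑ σ : Equiv.Perm (Fin m), ((Equiv.Perm.sign σ : ℤ) : ℝ) * ∏ i, M s i (σ i))
      (∑ σ : Equiv.Perm (Fin m), ((Equiv.Perm.sign σ : ℤ) : ℝ) *
        ∑ i, (∏ j ∈ Finset.univ.erase i, M t j (σ j)) • M' i (σ i)) t := by
    apply HasDerivAt.fun_sum
    intro σ _
    exact ((HasDerivAt.fun_finsetProd (fun i _ => h i (σ i)))).const_mul _
  have hfun : (fun s => (M s).det)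
      = fun s => ∑ σ : Equiv.Perm (Fin m), ((Equiv.Perm.sign σ : ℤ) : ℝ) * ∏ i, M s i (σ i) := by
    funext s; exact det_eq_sum_rows _
  rw [hfun]
  convert key using 1
  have e : ∀ i (σ : Equiv.Perm (Fin m)), ∏ j, ((M t).updateRow i (M' i)) j (σ j)
      = M' i (σ i) * ∏ j ∈ Finset.univ.erase i, M t j (σ j) := by
    intro i σ
    rw [← Finset.mul_prod_erase Finset.univ _ (Finset.mem_univ i)]
    congr 1
    · simp
    · exact Finset.prod_congr rfl fun j hj => by
        rw [updateRow_apply, if_neg (Finset.ne_of_mem_erase hj)]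
  simp only [det_eq_sum_rows, e, smul_eq_mul, Finset.mul_sum]
  rw [Finset.sum_comm]
  exact Finset.sum_congr rfl fun σ _ => Finset.sum_congr rfl fun i _ => by ring

/-- If we replace each row by the corresponding row of `B * M`, we get `trace B * det M`. -/
lemma sum_det_updateRow_mul {m : ℕ} (B M : Matrix (Fin m) (Fin m) ℝ) :
    ∑ i, (M.updateRow i ((B * M) i)).det = B.trace * M.det := by
  have hrow : ∀ i, (B * M) i = ∑ k, B i k • M k := by
    intro i; funext j; simp [mul_apply, Finset.sum_apply]
  calc ∑ i, (M.updateRow i ((B * M) i)).det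
      = ∑ i, (M.updateRow i (∑ k, B i k • M k)).det := by
        simp only [hrow]
    _ = ∑ i, B i i • M.det := by
        exact Finset.sum_congr rfl fun i _ => det_updateRow_sum M i (fun k => B i k)
    _ = B.trace * M.det := by
        rw [trace, Finset.sum_mul]; simp [diag, smul_eq_mul]

/-- Liouville-type formula. -/
lemma hasDerivAt_det_mul {m : ℕ} (M : ℝ → Matrix (Fin m) (Fin m) ℝ)
    (B : Matrix (Fin m) (Fin m) ℝ) (t : ℝ)
    (h : ∀ i j, HasDerivAt (fun s => M s i j) ((B * M t) i j) t) :
    HasDerivAt (fun s => (M s).det) (B.trace * (M t).det) t := by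
  have := hasDerivAt_det' M (B * M t) t h
  rwa [sum_det_updateRow_mul] at this

/-- With `A(t) = I + V(t)²`, `V` symmetric solving `V' = -V² - R`, and `Φ` the
fundamental solution of `ξ' = Vξ`, the logarithmic derivative of
`a(t) = √(det A(t)) · det Φ(t)` equals `½ Tr(A'A⁻¹) + Tr V`, which equals
`Tr[(V - RV)(I + V²)⁻¹]`. -/
theorem stmt13 {m : ℕ} (V V' R : ℝ → Matrix (Fin m) (Fin m) ℝ)
    (hVsym : ∀ t, (V t).IsSymm)
    (hV' : ∀ t i j, HasDerivAt (fun s => V s i j) (V' t i j) t)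
    (hV'c : Continuous V')
    (hRic : ∀ t, V' t = -(V t) ^ 2 - R t)
    (Φ : ℝ → Matrix (Fin m) (Fin m) ℝ)
    (hΦ : ∀ t i j, HasDerivAt (fun s => Φ s i j) ((V t * Φ t) i j) t)
    (hΦ0 : Φ 0 = 1) :
    ∀ t : ℝ,
      deriv (fun s => Real.log (Real.sqrt (1 + (V s) ^ 2).det * (Φ s).det)) t
        = (1 / 2) * ((V' t * V t + V t * V' t) * (1 + (V t) ^ 2)⁻¹).trace
            + (V t).trace ∧
      (1 / 2) * ((V' t * V t + V t * V' t) * (1 + (V t) ^ 2)⁻¹).trace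
            + (V t).trace
        = ((V t - R t * V t) * (1 + (V t) ^ 2)⁻¹).trace := by
  intro t
  have hVt : ∀ s, (V s)ᵀ = V s := fun s => hVsym s
  -- A is positive definite
  have hApos : ∀ s, ((1 : Matrix (Fin m) (Fin m) ℝ) + (V s) ^ 2).PosDef := by
    intro s
    have h1 : ((V s)ᴴ * V s).PosSemidef := posSemidef_conjTranspose_mul_self (V s)
    have h2 : (V s)ᴴ = V s := by
      rw [conjTranspose_eq_transpose_of_trivial, hVt]
    rw [h2, ← pow_two] at h1
    exact Matrix.PosDef.add_posSemidef Matrix.PosDef.one h1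
  have hAdet : ∀ s, 0 < ((1 : Matrix (Fin m) (Fin m) ℝ) + (V s) ^ 2).det :=
    fun s => (hApos s).det_pos
  have hAW : ∀ s, ((1 : Matrix (Fin m) (Fin m) ℝ) + (V s) ^ 2) * (1 + (V s) ^ 2)⁻¹ = 1 :=
    fun s => mul_nonsing_inv _ (hAdet s).ne'.isUnit
  have hWA : ∀ s, ((1 : Matrix (Fin m) (Fin m) ℝ) + (V s) ^ 2)⁻¹ * (1 + (V s) ^ 2) = 1 :=
    fun s => nonsing_inv_mul _ (hAdet s).ne'.isUnit
  -- derivative of the entries of A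
  have hA' : ∀ u i j, HasDerivAt (fun s => ((1 : Matrix (Fin m) (Fin m) ℝ) + (V s) ^ 2) i j)
      ((V' u * V u + V u * V' u) i j) u := by
    intro u i j
    have h1 : HasDerivAt (fun s => (1 : Matrix (Fin m) (Fin m) ℝ) i j + ∑ k, V s i k * V s k j)
        (∑ k, (V' u i k * V u k j + V u i k * V' u k j)) u :=
      HasDerivAt.const_add _ (HasDerivAt.fun_sum fun k _ => (hV' u i k).mul (hV' u k j))
    have e1 : (fun s => ((1 : Matrix (Fin m) (Fin m) ℝ) + (V s) ^ 2) i j)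
        = fun s => (1 : Matrix (Fin m) (Fin m) ℝ) i j + ∑ k, V s i k * V s k j := by
      funext s; simp [Matrix.add_apply, pow_two, Matrix.mul_apply]
    have e2 : (V' u * V u + V u * V' u) i j
        = ∑ k, (V' u i k * V u k j + V u i k * V' u k j) := by
      simp [Matrix.add_apply, Matrix.mul_apply, Finset.sum_add_distrib]
    rw [e1, e2]; exact h1
  -- derivative of det A
  have hdetA : ∀ u, HasDerivAt (fun s => ((1 : Matrix (Fin m) (Fin m) ℝ) + (V s) ^ 2).det)
      (((V' u * V u + V u * V' u) * (1 + (V u) ^ 2)⁻¹).trace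
        * ((1 : Matrix (Fin m) (Fin m) ℝ) + (V u) ^ 2).det) u := by
    intro u
    apply hasDerivAt_det_mul
    intro i j
    have e : (V' u * V u + V u * V' u) * (1 + (V u) ^ 2)⁻¹
        * ((1 : Matrix (Fin m) (Fin m) ℝ) + (V u) ^ 2) = V' u * V u + V u * V' u := by
      rw [mul_assoc, hWA, mul_one]
    rw [e]; exact hA' u i j
  -- derivative of det Φ
  have hdetΦ : ∀ u, HasDerivAt (fun s => (Φ s).det) ((V u).trace * (Φ u).det) u :=
    fun u => hasDerivAt_det_mul Φ (V u) u (hΦ u)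
  -- positivity of det Φ
  have htrc : Continuous (fun s => (V s).trace) := by
    have : (fun s => (V s).trace) = fun s => ∑ i, V s i i := by funext s; rfl
    rw [this]
    exact continuous_finset_sum _ fun i _ =>
      (Differentiable.continuous fun s => (hV' s i i).differentiableAt)
  set F : ℝ → ℝ := fun u => ∫ s in (0:ℝ)..u, (V s).trace with hF
  have hFd : ∀ u, HasDerivAt F ((V u).trace) u :=
    fun u => (htrc.integral_hasStrictDerivAt 0 u).hasDerivAt
  have hg : ∀ u, HasDerivAt (fun s => (Φ s).det * Real.exp (-(F s))) 0 u := by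
    intro u
    have h1 := (hdetΦ u).mul ((hFd u).neg.exp)
    refine h1.congr_deriv ?_
    ring
  have hgc : ∀ u, (Φ u).det * Real.exp (-(F u)) = 1 := by
    have hconst := is_const_of_deriv_eq_zero
      (f := fun s => (Φ s).det * Real.exp (-(F s)))
      (fun u => (hg u).differentiableAt) (fun u => (hg u).deriv)
    intro u
    have h0 : (Φ u).det * Real.exp (-F u) = (Φ 0).det * Real.exp (-F 0) := hconst u 0
    rw [h0]
    simp [hΦ0, hF, intervalIntegral.integral_same]
  have hdetΦpos : ∀ u, 0 < (Φ u).det := by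
    intro u
    nlinarith [hgc u, Real.exp_pos (-(F u))]
  -- rewrite the log
  have hflog : (fun s => Real.log (Real.sqrt ((1 : Matrix (Fin m) (Fin m) ℝ) + (V s) ^ 2).det
        * (Φ s).det))
      = fun s => (1 / 2) * Real.log (((1 : Matrix (Fin m) (Fin m) ℝ) + (V s) ^ 2).det)
          + Real.log ((Φ s).det) := by
    funext s
    rw [Real.log_mul (Real.sqrt_pos.mpr (hAdet s)).ne' (hdetΦpos s).ne',
      Real.log_sqrt (hAdet s).le]
    ring
  have hmain : HasDerivAt
      (fun s => (1 / 2) * Real.log (((1 : Matrix (Fin m) (Fin m) ℝ) + (V s) ^ 2).det)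
          + Real.log ((Φ s).det))
      ((1 / 2) * ((V' t * V t + V t * V' t) * (1 + (V t) ^ 2)⁻¹).trace + (V t).trace) t := by
    have h1 := ((hdetA t).log (hAdet t).ne').const_mul (1 / 2 : ℝ)
    have h2 := (hdetΦ t).log (hdetΦpos t).ne'
    refine (h1.add h2).congr_deriv ?_
    rw [mul_div_assoc, mul_div_assoc, div_self (hAdet t).ne', div_self (hdetΦpos t).ne',
      mul_one, mul_one]
  constructor
  · rw [hflog]
    exact hmain.deriv
  · -- symmetry facts
    have hV'sym : (V' t)ᵀ = V' t := by
      ext i j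
      rw [transpose_apply]
      have heq : (fun s => V s j i) = (fun s => V s i j) :=
        funext fun s => (hVsym s).apply i j
      exact (heq ▸ hV' t j i).unique (hV' t i j)
    have hRsym : (R t)ᵀ = R t := by
      have hR : R t = -(V t) ^ 2 - V' t := by
        rw [hRic t]; abel
      rw [hR]
      simp [transpose_sub, transpose_neg, pow_two, transpose_mul, hVt, hV'sym]
    have hWsym : ((1 + (V t) ^ 2)⁻¹)ᵀ = ((1 : Matrix (Fin m) (Fin m) ℝ) + (V t) ^ 2)⁻¹ := by
      rw [transpose_nonsing_inv]
      congr 1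
      simp [transpose_add, pow_two, transpose_mul, hVt]
    have key1 : (V t).trace = (V t * (1 + (V t) ^ 2)⁻¹).trace
        + (V t ^ 3 * (1 + (V t) ^ 2)⁻¹).trace := by
      have e : V t = V t * (1 + (V t) ^ 2)⁻¹ + V t ^ 3 * (1 + (V t) ^ 2)⁻¹ := by
        calc V t = V t * (((1 : Matrix (Fin m) (Fin m) ℝ) + (V t) ^ 2) * (1 + (V t) ^ 2)⁻¹) := by
              rw [hAW t, mul_one]
        _ = V t * (1 + (V t) ^ 2)⁻¹ + V t ^ 3 * (1 + (V t) ^ 2)⁻¹ := by noncomm_ring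
      conv_lhs => rw [e]
      rw [trace_add]
    have key2 : (V t * R t * (1 + (V t) ^ 2)⁻¹).trace
        = (R t * V t * (1 + (V t) ^ 2)⁻¹).trace := by
      conv_lhs => rw [← trace_transpose]
      rw [transpose_mul, transpose_mul, hWsym, hRsym, hVt, trace_mul_comm]
    have expand : ((-(V t) ^ 2 - R t) * V t + V t * (-(V t) ^ 2 - R t)) * (1 + (V t) ^ 2)⁻¹
        = -(V t ^ 3 * (1 + (V t) ^ 2)⁻¹) - R t * V t * (1 + (V t) ^ 2)⁻¹
          - V t ^ 3 * (1 + (V t) ^ 2)⁻¹ - V t * R t * (1 + (V t) ^ 2)⁻¹ := by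
      noncomm_ring
    rw [hRic t, expand, sub_mul]
    simp only [trace_sub, trace_neg]
    rw [key1]
    linarith [key2]
end
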